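/- Let m ≥ 1 and let d : ℤ^m × ℤ^m → [0,∞) be a metric on ℤ^m that is equivariant with respect to the action of ℤ^m on itself by addition, i.e., d(a + c, b + c) = d(a, b) for all a, b, c ∈ ℤ^m. Then there exists a unique seminorm ‖·‖_∞ on ℝ^m such that for every v ∈ ℤ^m (viewed inside ℝ^m via the standard inclusion), ‖v‖_∞ = lim_{n→∞} d(0, n·v)/n, where the limit is taken over positive integers n. -/

import Mathlib

open Filter Finset Topology

namespace BBI


noncomputable def flr {m : ℕ} (x : Fin m → ℝ) (n : ℕ) : Fin m → ℤ :=
  fun i => ⌊(n : ℝ) * x i⌋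

lemma g_sum {m : ℕ} {G : Type*} [AddCommMonoid G] (g : G → ℝ) (h0 : g 0 = 0)
    (hadd : ∀ a b, g (a + b) ≤ g a + g b) (f : Fin m → G) :
    g (∑ i, f i) ≤ ∑ i, g (f i) := by
  classical
  induction (univ : Finset (Fin m)) using Finset.cons_induction with
  | empty => simp [h0]
  | cons a s ha ih =>
    simp only [Finset.sum_cons]
    calc g (f a + ∑ i ∈ s, f i) ≤ g (f a) + g (∑ i ∈ s, f i) := hadd _ _
      _ ≤ g (f a) + ∑ i ∈ s, g (f i) := by linarith

lemma tendsto_of_near (a b : ℕ → ℝ) (L K : ℝ)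
    (hb : Tendsto b atTop (𝓝 L))
    (h : ∀ n : ℕ, 1 ≤ n → |a n - b n| ≤ K / n) :
    Tendsto a atTop (𝓝 L) := by
  refine hb.congr_dist (squeeze_zero' (.of_forall fun n => dist_nonneg) ?_
    (tendsto_const_div_atTop_nhds_zero_nat K))
  filter_upwards [eventually_ge_atTop 1] with n hn
  rw [Real.dist_eq, abs_sub_comm]
  exact h n hn

lemma le_of_near_le (a b : ℕ → ℝ) (A B K : ℝ)
    (ha : Tendsto a atTop (𝓝 A)) (hb : Tendsto b atTop (𝓝 B))
    (h : ∀ n : ℕ, 1 ≤ n → a n ≤ b n + K / n) : A ≤ B := by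
  have hb' : Tendsto (fun n : ℕ => b n + K / n) atTop (𝓝 (B + 0)) :=
    hb.add (tendsto_const_div_atTop_nhds_zero_nat K)
  rw [← add_zero B]
  refine le_of_tendsto_of_tendsto ha hb' ?_
  filter_upwards [eventually_ge_atTop 1] with n hn using h n hn

lemma Fdist {m : ℕ} (F : (Fin m → ℤ) → ℝ) (h0 : F 0 = 0)
    (hadd : ∀ a b, F (a + b) ≤ F a + F b)
    (hsmul : ∀ (k : ℤ) v, F (k • v) = |(k : ℝ)| * F v)
    (hpos : ∀ v, 0 ≤ F v) (a b : Fin m → ℤ) :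
    |F a - F b| ≤ (∑ i, F (Pi.single i 1)) * ∑ i, |(a i : ℝ) - (b i : ℝ)| := by
  set C := ∑ i, F (Pi.single i 1) with hC
  have hbd : ∀ w : Fin m → ℤ, F w ≤ C * ∑ i, |(w i : ℝ)| := by
    intro w
    have h1 : w = ∑ i, Pi.single i (w i) := (Finset.univ_sum_single w).symm
    have h2 : F w ≤ ∑ i, F (Pi.single i (w i)) := by
      conv_lhs => rw [h1]
      exact g_sum F h0 hadd _
    have h3 : ∀ i, F (Pi.single i (w i)) = |(w i : ℝ)| * F (Pi.single i 1) := by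
      intro i
      have he : Pi.single i (w i) = (w i) • (Pi.single i (1 : ℤ) : Fin m → ℤ) := by
        funext j
        by_cases hj : j = i <;> simp [hj, Pi.single_apply]
      rw [he, hsmul]
    calc F w ≤ ∑ i, F (Pi.single i (w i)) := h2
      _ = ∑ i, |(w i : ℝ)| * F (Pi.single i 1) := by simp [h3]
      _ ≤ ∑ i, |(w i : ℝ)| * C := by
          refine Finset.sum_le_sum fun i _ => ?_
          refine mul_le_mul_of_nonneg_left ?_ (abs_nonneg _)
          exact Finset.single_le_sum (f := fun j => F (Pi.single j 1))
            (fun j _ => hpos _) (Finset.mem_univ i)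
      _ = C * ∑ i, |(w i : ℝ)| := by rw [← Finset.sum_mul, mul_comm]
  have key : ∀ u v : Fin m → ℤ, F (u - v) ≤ C * ∑ i, |(u i : ℝ) - (v i : ℝ)| := by
    intro u v
    refine le_trans (hbd _) (le_of_eq ?_)
    congr 1
    refine Finset.sum_congr rfl fun i _ => ?_
    rw [Pi.sub_apply]
    push_cast
    rfl
  rw [abs_sub_le_iff]
  constructor
  · have h1 : F a ≤ F b + F (a - b) := by
      have := hadd b (a - b)
      simpa using this
    linarith [key a b]
  · have h1 : F b ≤ F a + F (b - a) := by
      have := hadd a (b - a)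
      simpa using this
    have h2 := key b a
    have h3 : C * ∑ i, |(b i : ℝ) - (a i : ℝ)| = C * ∑ i, |(a i : ℝ) - (b i : ℝ)| := by
      congr 1
      exact Finset.sum_congr rfl fun i _ => abs_sub_comm _ _
    linarith

lemma rlip {m : ℕ} (g : (Fin m → ℝ) → ℝ) (hpos : ∀ x, 0 ≤ g x)
    (hhom : ∀ (l : ℝ) w, g (l • w) = |l| * g w)
    (hadd : ∀ a b, g (a + b) ≤ g a + g b) (x y : Fin m → ℝ) :
    |g x - g y| ≤ (∑ i, g (Pi.single i 1)) * ∑ i, |x i - y i| := by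
  set C := ∑ i, g (Pi.single i 1) with hC
  have h0 : g 0 = 0 := by
    have := hhom 0 0
    simpa using this
  have hbd : ∀ w : Fin m → ℝ, g w ≤ C * ∑ i, |w i| := by
    intro w
    have h1 : w = ∑ i, Pi.single i (w i) := (Finset.univ_sum_single w).symm
    have h2 : g w ≤ ∑ i, g (Pi.single i (w i)) := by
      conv_lhs => rw [h1]
      exact g_sum g h0 hadd _
    have h3 : ∀ i, g (Pi.single i (w i)) = |w i| * g (Pi.single i 1) := by
      intro i
      have he : Pi.single i (w i) = (w i) • (Pi.single i (1 : ℝ) : Fin m → ℝ) := by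
        funext j
        by_cases hj : j = i <;> simp [hj, Pi.single_apply]
      rw [he, hhom]
    calc g w ≤ ∑ i, g (Pi.single i (w i)) := h2
      _ = ∑ i, |w i| * g (Pi.single i 1) := by simp [h3]
      _ ≤ ∑ i, |w i| * C := by
          refine Finset.sum_le_sum fun i _ => ?_
          refine mul_le_mul_of_nonneg_left ?_ (abs_nonneg _)
          exact Finset.single_le_sum (f := fun j => g (Pi.single j 1))
            (fun j _ => hpos _) (Finset.mem_univ i)
      _ = C * ∑ i, |w i| := by rw [← Finset.sum_mul, mul_comm]
  rw [abs_sub_le_iff]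
  constructor
  · have h1 : g x ≤ g y + g (x - y) := by
      have := hadd y (x - y)
      simpa using this
    have h2 := hbd (x - y)
    simp only [Pi.sub_apply] at h2
    linarith
  · have h1 : g y ≤ g x + g (y - x) := by
      have := hadd x (y - x)
      simpa using this
    have h2 := hbd (y - x)
    simp only [Pi.sub_apply] at h2
    have h3 : C * ∑ i, |y i - x i| = C * ∑ i, |x i - y i| := by
      congr 1
      exact Finset.sum_congr rfl fun i _ => abs_sub_comm _ _
    linarith

lemma scauchy {m : ℕ} (F : (Fin m → ℤ) → ℝ) (h0 : F 0 = 0)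
    (hadd : ∀ a b, F (a + b) ≤ F a + F b)
    (hsmul : ∀ (k : ℤ) v, F (k • v) = |(k : ℝ)| * F v)
    (hpos : ∀ v, 0 ≤ F v) (x : Fin m → ℝ) :
    CauchySeq (fun n : ℕ => F (flr x n) / n) := by
  set C := ∑ i, F (Pi.single i 1) with hC
  have hC0 : 0 ≤ C := Finset.sum_nonneg fun i _ => hpos _
  have key : ∀ n p : ℕ, 1 ≤ n → 1 ≤ p →
      |F (flr x n) / n - F (flr x p) / p| ≤ C * m * (1 / n + 1 / p) := by
    intro n p hn hp
    have hn0 : (0 : ℝ) < n := by exact_mod_cast hn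
    have hp0 : (0 : ℝ) < p := by exact_mod_cast hp
    have e1 : F ((p : ℤ) • flr x n) = p * F (flr x n) := by
      rw [hsmul]
      norm_num
    have e2 : F ((n : ℤ) • flr x p) = n * F (flr x p) := by
      rw [hsmul]
      norm_num
    have coord : ∀ i, |((((p : ℤ) • flr x n) i : ℤ) : ℝ) - (((n : ℤ) • flr x p) i : ℝ)|
        ≤ (n : ℝ) + p := by
      intro i
      have f1 := Int.floor_le ((n : ℝ) * x i)
      have f2 := Int.sub_one_lt_floor ((n : ℝ) * x i)
      have f3 := Int.floor_le ((p : ℝ) * x i)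
      have f4 := Int.sub_one_lt_floor ((p : ℝ) * x i)
      have hvn : ((((p : ℤ) • flr x n) i : ℤ) : ℝ) = (p : ℝ) * (⌊(n : ℝ) * x i⌋ : ℝ) := by
        simp [flr]
      have hvp : ((((n : ℤ) • flr x p) i : ℤ) : ℝ) = (n : ℝ) * (⌊(p : ℝ) * x i⌋ : ℝ) := by
        simp [flr]
      rw [hvn, hvp, abs_le]
      constructor <;> nlinarith [mul_le_mul_of_nonneg_left f1 hp0.le,
        mul_le_mul_of_nonneg_left f3 hn0.le,
        mul_lt_mul_of_pos_left f2 hp0, mul_lt_mul_of_pos_left f4 hn0]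
    have h3 : |F ((p : ℤ) • flr x n) - F ((n : ℤ) • flr x p)| ≤ C * (m * ((n : ℝ) + p)) := by
      refine le_trans (Fdist F h0 hadd hsmul hpos _ _) ?_
      refine mul_le_mul_of_nonneg_left ?_ hC0
      calc ∑ i, |((((p : ℤ) • flr x n) i : ℤ) : ℝ) - (((n : ℤ) • flr x p) i : ℝ)|
          ≤ ∑ _i : Fin m, ((n : ℝ) + p) := Finset.sum_le_sum fun i _ => coord i
        _ = m * ((n : ℝ) + p) := by simp [Finset.sum_const, nsmul_eq_mul]; ring
    have heq : F (flr x n) / n - F (flr x p) / p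
        = (F ((p : ℤ) • flr x n) - F ((n : ℤ) • flr x p)) / (n * p) := by
      rw [e1, e2]
      field_simp
    rw [heq, abs_div, abs_of_pos (mul_pos hn0 hp0)]
    rw [div_le_iff₀ (mul_pos hn0 hp0)]
    calc |F ((p : ℤ) • flr x n) - F ((n : ℤ) • flr x p)| ≤ C * (m * ((n : ℝ) + p)) := h3
      _ = C * m * (1 / n + 1 / p) * (n * p) := by field_simp; ring
  rw [Metric.cauchySeq_iff']
  intro ε hε
  refine ⟨max 1 (⌈2 * C * m / ε⌉₊ + 1), fun n hn => ?_⟩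
  set N := max 1 (⌈2 * C * m / ε⌉₊ + 1) with hN
  have hN1 : 1 ≤ N := le_max_left _ _
  have hn1 : 1 ≤ n := le_trans hN1 hn
  have hN0 : (0 : ℝ) < N := by exact_mod_cast hN1
  have hn0 : (0 : ℝ) < n := by exact_mod_cast hn1
  have hNn : (N : ℝ) ≤ n := by exact_mod_cast hn
  have hNbig : 2 * C * m / ε < N := by
    have h1 : 2 * C * m / ε ≤ (⌈2 * C * m / ε⌉₊ : ℝ) := Nat.le_ceil _
    have h2 : ((⌈2 * C * m / ε⌉₊ + 1 : ℕ) : ℝ) ≤ N := by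
      exact_mod_cast le_max_right 1 (⌈2 * C * m / ε⌉₊ + 1)
    push_cast at h2
    linarith
  rw [Real.dist_eq]
  calc |F (flr x n) / n - F (flr x N) / N| ≤ C * m * (1 / n + 1 / N) := key n N hn1 hN1
    _ ≤ C * m * (1 / N + 1 / N) := by
        refine mul_le_mul_of_nonneg_left ?_ (by positivity)
        have : (1 : ℝ) / n ≤ 1 / N := one_div_le_one_div_of_le hN0 hNn
        linarith
    _ = 2 * C * m / N := by ring
    _ < ε := by
        rw [div_lt_iff₀ hN0, mul_comm ε]
        calc 2 * C * m = 2 * C * m / ε * ε := by field_simp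
          _ < N * ε := mul_lt_mul_of_pos_right hNbig hε

end BBI

set_option maxHeartbeats 2000000 in
theorem equivariant_metric_asymptotic_seminorm
    (m : ℕ) (hm : 1 ≤ m) (d : (Fin m → ℤ) → (Fin m → ℤ) → ℝ)
    (hd_nonneg : ∀ a b, 0 ≤ d a b)
    (hd_symm : ∀ a b, d a b = d b a)
    (hd_triangle : ∀ a b c, d a c ≤ d a b + d b c)
    (hd_eq_zero : ∀ a b, d a b = 0 ↔ a = b)
    (hd_equivariant : ∀ a b c, d (a + c) (b + c) = d a b) :
    ∃! N : (Fin m → ℝ) → ℝ,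
      ((∀ w, 0 ≤ N w)
        ∧ (∀ (l : ℝ) (w : Fin m → ℝ), N (l • w) = |l| * N w)
        ∧ (∀ w w' : Fin m → ℝ, N (w + w') ≤ N w + N w'))
      ∧ ∀ v : Fin m → ℤ,
          Tendsto (fun n : ℕ => d 0 ((n : ℤ) • v) / (n : ℝ)) atTop
            (nhds (N (fun i => (v i : ℝ)))) := by
  classical
  -- basic facts about d
  have dadd : ∀ a b : Fin m → ℤ, d 0 (a + b) ≤ d 0 a + d 0 b := by
    intro a b
    have h1 := hd_triangle 0 a (a + b)
    have h2 := hd_equivariant 0 b a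
    rw [zero_add, add_comm b a] at h2
    linarith
  have dneg : ∀ a : Fin m → ℤ, d 0 (-a) = d 0 a := by
    intro a
    have h := hd_equivariant 0 (-a) a
    rw [zero_add, neg_add_cancel] at h
    rw [← h, hd_symm]
  -- existence of the asymptotic limit on integer vectors
  have hex : ∀ v : Fin m → ℤ, ∃ L, 0 ≤ L ∧
      Tendsto (fun n : ℕ => d 0 ((n : ℤ) • v) / (n : ℝ)) atTop (𝓝 L) := by
    intro v
    have hsub : Subadditive (fun n : ℕ => d 0 ((n : ℤ) • v)) := by
      intro a b
      have he : ((a + b : ℕ) : ℤ) • v = (a : ℤ) • v + (b : ℤ) • v := by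
        push_cast
        rw [add_smul]
      simp only [he]
      exact dadd _ _
    have hbdd : BddBelow (Set.range fun n : ℕ => d 0 ((n : ℤ) • v) / n) := by
      refine ⟨0, ?_⟩
      rintro y ⟨n, rfl⟩
      exact div_nonneg (hd_nonneg _ _) (Nat.cast_nonneg n)
    have ht := hsub.tendsto_lim hbdd
    exact ⟨_, ge_of_tendsto' ht fun n => div_nonneg (hd_nonneg _ _) (Nat.cast_nonneg n), ht⟩
  choose F hFpos hF using hex
  -- properties of F
  have h0 : F 0 = 0 := by
    refine tendsto_nhds_unique (hF 0) ?_
    have he : (fun n : ℕ => d 0 ((n : ℤ) • (0 : Fin m → ℤ)) / n) = fun _ => (0 : ℝ) := by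
      funext n
      simp [(hd_eq_zero 0 0).mpr rfl]
    rw [he]
    exact tendsto_const_nhds
  have hFadd : ∀ v w, F (v + w) ≤ F v + F w := by
    intro v w
    refine BBI.le_of_near_le _ (fun n : ℕ => d 0 ((n : ℤ) • v) / n + d 0 ((n : ℤ) • w) / n)
      _ _ 0 (hF (v + w)) ((hF v).add (hF w)) ?_
    intro n hn
    have hn0 : (0 : ℝ) ≤ n := Nat.cast_nonneg n
    simp only [zero_div, add_zero]
    rw [← add_div]
    have he : (n : ℤ) • (v + w) = (n : ℤ) • v + (n : ℤ) • w := smul_add _ _ _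
    rw [he]
    gcongr
    exact dadd _ _
  have hFneg : ∀ v, F (-v) = F v := by
    intro v
    refine tendsto_nhds_unique (hF (-v)) ((hF v).congr fun n => ?_)
    rw [smul_neg, dneg]
  have hFnat : ∀ (k : ℕ), 1 ≤ k → ∀ v, F ((k : ℤ) • v) = k * F v := by
    intro k hk v
    have hmono : Tendsto (fun n : ℕ => k * n) atTop atTop := by
      apply tendsto_atTop_atTop_of_monotone
      · exact fun a b h => Nat.mul_le_mul_left k h
      · intro n
        exact ⟨n, Nat.le_mul_of_pos_left n hk⟩
    have h1 : Tendsto (fun n : ℕ => d 0 (((k * n : ℕ) : ℤ) • v) / ((k * n : ℕ) : ℝ))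
        atTop (𝓝 (F v)) := (hF v).comp hmono
    have h2 := h1.const_mul (k : ℝ)
    refine tendsto_nhds_unique (hF ((k : ℤ) • v)) (h2.congr' ?_)
    filter_upwards [eventually_ge_atTop 1] with n hn
    have hk0 : ((k : ℝ)) ≠ 0 := Nat.cast_ne_zero.mpr (by omega)
    have hn0 : ((n : ℝ)) ≠ 0 := Nat.cast_ne_zero.mpr (by omega)
    have hsm : ((k * n : ℕ) : ℤ) • v = (n : ℤ) • ((k : ℤ) • v) := by
      rw [smul_smul]
      congr 1
      push_cast
      ring
    rw [hsm]
    push_cast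
    field_simp
  have hFsmul : ∀ (k : ℤ) v, F (k • v) = |(k : ℝ)| * F v := by
    intro k v
    obtain ⟨j, rfl | rfl⟩ := k.eq_nat_or_neg
    · rcases Nat.eq_zero_or_pos j with rfl | hj
      · simp [h0]
      · rw [hFnat j hj v]
        push_cast
        rw [abs_of_nonneg (Nat.cast_nonneg j)]
    · rcases Nat.eq_zero_or_pos j with rfl | hj
      · simp [h0]
      · rw [neg_smul, hFneg, hFnat j hj v]
        push_cast
        rw [abs_neg, abs_of_nonneg (Nat.cast_nonneg j)]
  -- the seminorm on ℝ^m
  have hcau : ∀ x : Fin m → ℝ, ∃ L, Tendsto (fun n : ℕ => F (BBI.flr x n) / n) atTop (𝓝 L) :=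
    fun x => cauchySeq_tendsto_of_complete (BBI.scauchy F h0 hFadd hFsmul hFpos x)
  choose N hN using hcau
  set C := ∑ i, F (Pi.single i 1) with hC
  have hC0 : 0 ≤ C := Finset.sum_nonneg fun i _ => hFpos _
  have hNint : ∀ v : Fin m → ℤ, N (fun i => (v i : ℝ)) = F v := by
    intro v
    refine tendsto_nhds_unique (hN _) (tendsto_const_nhds.congr' ?_)
    filter_upwards [eventually_ge_atTop 1] with n hn
    have hn0 : ((n : ℝ)) ≠ 0 := Nat.cast_ne_zero.mpr (by omega)
    have hfl : BBI.flr (fun i => (v i : ℝ)) n = (n : ℤ) • v := by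
      funext i
      show ⌊(n : ℝ) * ((v i : ℤ) : ℝ)⌋ = n * v i
      rw [show (n : ℝ) * ((v i : ℤ) : ℝ) = (((n : ℤ) * v i : ℤ) : ℝ) by push_cast; ring,
        Int.floor_intCast]
    rw [hfl, hFnat n hn v, mul_comm, mul_div_assoc, div_self hn0, mul_one]
  have hNpos : ∀ x, 0 ≤ N x :=
    fun x => ge_of_tendsto' (hN x) fun n => div_nonneg (hFpos _) (Nat.cast_nonneg n)
  have hNzero : N 0 = 0 := by
    refine tendsto_nhds_unique (hN 0) (tendsto_const_nhds.congr fun n => ?_)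
    have he : BBI.flr (0 : Fin m → ℝ) n = 0 := by
      funext i
      show ⌊(n : ℝ) * (0 : ℝ)⌋ = 0
      simp
    rw [he, h0, zero_div]
  have hNlip : ∀ x y, |N x - N y| ≤ C * ∑ i, |x i - y i| := by
    intro x y
    refine BBI.le_of_near_le (fun n : ℕ => |F (BBI.flr x n) / n - F (BBI.flr y n) / n|)
      (fun _ => C * ∑ i, |x i - y i|) _ _ (C * (2 * m))
      ((hN x).sub (hN y)).abs tendsto_const_nhds ?_
    intro n hn
    have hn0 : (0 : ℝ) < n := by exact_mod_cast hn
    beta_reduce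
    have coord : ∀ i, |((BBI.flr x n i : ℤ) : ℝ) - ((BBI.flr y n i : ℤ) : ℝ)|
        ≤ (n : ℝ) * |x i - y i| + 2 := by
      intro i
      have f1 := Int.floor_le ((n : ℝ) * x i)
      have f2 := Int.sub_one_lt_floor ((n : ℝ) * x i)
      have f3 := Int.floor_le ((n : ℝ) * y i)
      have f4 := Int.sub_one_lt_floor ((n : ℝ) * y i)
      have h5 : (n : ℝ) * (x i - y i) ≤ (n : ℝ) * |x i - y i| :=
        mul_le_mul_of_nonneg_left (le_abs_self _) hn0.le
      have h6 : (n : ℝ) * (y i - x i) ≤ (n : ℝ) * |x i - y i| := by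
        rw [abs_sub_comm]
        exact mul_le_mul_of_nonneg_left (le_abs_self _) hn0.le
      simp only [BBI.flr]
      rw [abs_le]
      constructor <;> nlinarith
    have h1 : |F (BBI.flr x n) - F (BBI.flr y n)|
        ≤ C * ((n : ℝ) * ∑ i, |x i - y i| + 2 * m) := by
      refine le_trans (BBI.Fdist F h0 hFadd hFsmul hFpos _ _) ?_
      refine mul_le_mul_of_nonneg_left ?_ hC0
      calc ∑ i, |((BBI.flr x n i : ℤ) : ℝ) - ((BBI.flr y n i : ℤ) : ℝ)|
          ≤ ∑ i, ((n : ℝ) * |x i - y i| + 2) := Finset.sum_le_sum fun i _ => coord i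
        _ = (n : ℝ) * ∑ i, |x i - y i| + 2 * m := by
            rw [Finset.sum_add_distrib, ← Finset.mul_sum]
            simp [Finset.sum_const, nsmul_eq_mul]
            ring
    rw [div_sub_div_same, abs_div, abs_of_pos hn0]
    calc |F (BBI.flr x n) - F (BBI.flr y n)| / n
        ≤ (C * ((n : ℝ) * ∑ i, |x i - y i| + 2 * m)) / n := by gcongr
      _ = C * ∑ i, |x i - y i| + C * (2 * m) / n := by field_simp
  have hNadd : ∀ x y, N (x + y) ≤ N x + N y := by
    intro x y
    refine BBI.le_of_near_le _ (fun n : ℕ => F (BBI.flr x n) / n + F (BBI.flr y n) / n)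
      _ _ (C * (2 * m)) (hN (x + y)) ((hN x).add (hN y)) ?_
    intro n hn
    have hn0 : (0 : ℝ) < n := by exact_mod_cast hn
    beta_reduce
    have coord : ∀ i, |((BBI.flr (x + y) n i : ℤ) : ℝ)
        - (((BBI.flr x n + BBI.flr y n) i : ℤ) : ℝ)| ≤ 2 := by
      intro i
      have f1 := Int.floor_le ((n : ℝ) * (x + y) i)
      have f2 := Int.sub_one_lt_floor ((n : ℝ) * (x + y) i)
      have f3 := Int.floor_le ((n : ℝ) * x i)
      have f4 := Int.sub_one_lt_floor ((n : ℝ) * x i)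
      have f5 := Int.floor_le ((n : ℝ) * y i)
      have f6 := Int.sub_one_lt_floor ((n : ℝ) * y i)
      have he : (n : ℝ) * (x + y) i = (n : ℝ) * x i + (n : ℝ) * y i := by
        simp [Pi.add_apply]
        ring
      have hc : (((BBI.flr x n + BBI.flr y n) i : ℤ) : ℝ)
          = ((BBI.flr x n i : ℤ) : ℝ) + ((BBI.flr y n i : ℤ) : ℝ) := by
        push_cast [Pi.add_apply]
        ring
      rw [hc]
      simp only [BBI.flr]
      rw [abs_le]
      constructor <;> nlinarith
    have h1 : F (BBI.flr (x + y) n)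
        ≤ F (BBI.flr x n) + F (BBI.flr y n) + C * (2 * m) := by
      have hd1 := BBI.Fdist F h0 hFadd hFsmul hFpos (BBI.flr (x + y) n)
        (BBI.flr x n + BBI.flr y n)
      have hd2 : (∑ i, |((BBI.flr (x + y) n i : ℤ) : ℝ)
          - (((BBI.flr x n + BBI.flr y n) i : ℤ) : ℝ)|) ≤ 2 * m := by
        calc (∑ i, |((BBI.flr (x + y) n i : ℤ) : ℝ)
            - (((BBI.flr x n + BBI.flr y n) i : ℤ) : ℝ)|)
            ≤ ∑ _i : Fin m, (2 : ℝ) := Finset.sum_le_sum fun i _ => coord i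
          _ = 2 * m := by simp [Finset.sum_const, nsmul_eq_mul]; ring
      have h3 := hFadd (BBI.flr x n) (BBI.flr y n)
      have h4 : F (BBI.flr (x + y) n) - F (BBI.flr x n + BBI.flr y n)
          ≤ C * (2 * m) := by
        have := abs_sub_le_iff.mp hd1
        nlinarith [this.1, mul_le_mul_of_nonneg_left hd2 hC0]
      linarith
    calc F (BBI.flr (x + y) n) / n
        ≤ (F (BBI.flr x n) + F (BBI.flr y n) + C * (2 * m)) / n := by gcongr
      _ = F (BBI.flr x n) / n + F (BBI.flr y n) / n + C * (2 * m) / n := by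
          rw [add_div, add_div]
  have hNneg : ∀ x, N (-x) = N x := by
    intro x
    refine tendsto_nhds_unique (hN (-x)) (BBI.tendsto_of_near _ _ _ (C * (2 * m)) (hN x) ?_)
    intro n hn
    have hn0 : (0 : ℝ) < n := by exact_mod_cast hn
    beta_reduce
    have hFn : F (BBI.flr x n) = F (-(BBI.flr x n)) := (hFneg _).symm
    rw [div_sub_div_same, abs_div, abs_of_pos hn0, hFn]
    have coord : ∀ i, |((BBI.flr (-x) n i : ℤ) : ℝ) - (((-(BBI.flr x n)) i : ℤ) : ℝ)| ≤ 2 := by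
      intro i
      have f1 := Int.floor_le ((n : ℝ) * (-x) i)
      have f2 := Int.sub_one_lt_floor ((n : ℝ) * (-x) i)
      have f3 := Int.floor_le ((n : ℝ) * x i)
      have f4 := Int.sub_one_lt_floor ((n : ℝ) * x i)
      have he : (n : ℝ) * (-x) i = -((n : ℝ) * x i) := by
        simp [Pi.neg_apply]
      have hc : (((-(BBI.flr x n)) i : ℤ) : ℝ) = -((BBI.flr x n i : ℤ) : ℝ) := by
        push_cast [Pi.neg_apply]
        ring
      rw [hc]
      simp only [BBI.flr]
      rw [abs_le]
      constructor <;> nlinarith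
    have h1 : |F (BBI.flr (-x) n) - F (-(BBI.flr x n))| ≤ C * (2 * m) := by
      refine le_trans (BBI.Fdist F h0 hFadd hFsmul hFpos _ _) ?_
      refine le_trans (mul_le_mul_of_nonneg_left ?_ hC0) le_rfl
      calc (∑ i, |((BBI.flr (-x) n i : ℤ) : ℝ) - (((-(BBI.flr x n)) i : ℤ) : ℝ)|)
          ≤ ∑ _i : Fin m, (2 : ℝ) := Finset.sum_le_sum fun i _ => coord i
        _ = 2 * m := by simp [Finset.sum_const, nsmul_eq_mul]; ring
    calc |F (BBI.flr (-x) n) - F (-(BBI.flr x n))| / n ≤ (C * (2 * m)) / n := by gcongr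
      _ = C * (2 * m) / n := rfl
  have hNnat : ∀ (k : ℕ), 1 ≤ k → ∀ x, N ((k : ℝ) • x) = k * N x := by
    intro k hk x
    have hk0 : (0 : ℝ) < k := by exact_mod_cast hk
    refine tendsto_nhds_unique (hN _) (BBI.tendsto_of_near _
      (fun n : ℕ => (k : ℝ) * (F (BBI.flr x n) / n)) _ (C * (m * k))
      ((hN x).const_mul _) ?_)
    intro n hn
    have hn0 : (0 : ℝ) < n := by exact_mod_cast hn
    beta_reduce
    have e1 : (k : ℝ) * (F (BBI.flr x n) / n) = F ((k : ℤ) • BBI.flr x n) / n := by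
      rw [hFnat k hk]
      ring
    rw [e1, div_sub_div_same, abs_div, abs_of_pos hn0]
    have coord : ∀ i, |((BBI.flr ((k : ℝ) • x) n i : ℤ) : ℝ)
        - ((((k : ℤ) • BBI.flr x n) i : ℤ) : ℝ)| ≤ k := by
      intro i
      have f1 := Int.floor_le ((n : ℝ) * ((k : ℝ) • x) i)
      have f2 := Int.sub_one_lt_floor ((n : ℝ) * ((k : ℝ) • x) i)
      have f3 := Int.floor_le ((n : ℝ) * x i)
      have f4 := Int.sub_one_lt_floor ((n : ℝ) * x i)
      have he : (n : ℝ) * ((k : ℝ) • x) i = (k : ℝ) * ((n : ℝ) * x i) := by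
        simp [Pi.smul_apply, smul_eq_mul]
        ring
      have hc : ((((k : ℤ) • BBI.flr x n) i : ℤ) : ℝ)
          = (k : ℝ) * ((BBI.flr x n i : ℤ) : ℝ) := by
        simp only [Pi.smul_apply, smul_eq_mul]
        push_cast
        ring
      have h5 := mul_le_mul_of_nonneg_left f3 hk0.le
      have h6 := mul_lt_mul_of_pos_left f4 hk0
      have hk1 : (1 : ℝ) ≤ k := by exact_mod_cast hk
      rw [hc]
      simp only [BBI.flr]
      rw [abs_le]
      constructor <;> nlinarith
    have h1 : |F (BBI.flr ((k : ℝ) • x) n) - F ((k : ℤ) • BBI.flr x n)| ≤ C * (m * k) := by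
      refine le_trans (BBI.Fdist F h0 hFadd hFsmul hFpos _ _) ?_
      refine mul_le_mul_of_nonneg_left ?_ hC0
      calc (∑ i, |((BBI.flr ((k : ℝ) • x) n i : ℤ) : ℝ)
          - ((((k : ℤ) • BBI.flr x n) i : ℤ) : ℝ)|)
          ≤ ∑ _i : Fin m, (k : ℝ) := Finset.sum_le_sum fun i _ => coord i
        _ = m * k := by simp [Finset.sum_const, nsmul_eq_mul]
    calc |F (BBI.flr ((k : ℝ) • x) n) - F ((k : ℤ) • BBI.flr x n)| / n
        ≤ (C * (m * k)) / n := by gcongr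
      _ = C * (m * k) / n := rfl
  have hNhom : ∀ (l : ℝ) (x : Fin m → ℝ), N (l • x) = |l| * N x := by
    have hnn : ∀ (l : ℝ), 0 ≤ l → ∀ x, N (l • x) = l * N x := by
      intro l hl x
      have ha : Tendsto (fun n : ℕ => ((⌊l * (n : ℝ)⌋₊ : ℕ) : ℝ) / n) atTop (𝓝 l) :=
        (tendsto_nat_floor_mul_div_atTop hl).comp tendsto_natCast_atTop_atTop
      have key : ∀ n : ℕ, 1 ≤ n →
          N (((((⌊l * (n : ℝ)⌋₊ : ℕ) : ℝ)) / n) • x)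
            = ((⌊l * (n : ℝ)⌋₊ : ℕ) : ℝ) / n * N x := by
        intro n hn
        have hn0 : ((n : ℝ)) ≠ 0 := Nat.cast_ne_zero.mpr (by omega)
        by_cases hk0 : ⌊l * (n : ℝ)⌋₊ = 0
        · rw [hk0]
          norm_num [hNzero]
        · have hk1 : 1 ≤ ⌊l * (n : ℝ)⌋₊ := Nat.one_le_iff_ne_zero.mpr hk0
          have h2 : ((n : ℝ)) • (((((⌊l * (n : ℝ)⌋₊ : ℕ) : ℝ)) / n) • x)
              = ((⌊l * (n : ℝ)⌋₊ : ℕ) : ℝ) • x := by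
            rw [smul_smul]
            congr 1
            field_simp
          have h1 := hNnat n hn (((((⌊l * (n : ℝ)⌋₊ : ℕ) : ℝ)) / n) • x)
          rw [h2, hNnat _ hk1 x] at h1
          have h3 : N (((((⌊l * (n : ℝ)⌋₊ : ℕ) : ℝ)) / n) • x)
              = (((⌊l * (n : ℝ)⌋₊ : ℕ) : ℝ) * N x) / n := by
            rw [eq_div_iff hn0]
            linarith
          rw [h3, div_mul_eq_mul_div]
      have h1 : Tendsto (fun n : ℕ => N (((((⌊l * (n : ℝ)⌋₊ : ℕ) : ℝ)) / n) • x)) atTop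
          (𝓝 (N (l • x))) := by
        refine Filter.Tendsto.congr_dist (f₁ := fun _ => N (l • x)) tendsto_const_nhds ?_
        have h0' : Tendsto (fun n : ℕ => |l - ((⌊l * (n : ℝ)⌋₊ : ℕ) : ℝ) / n|) atTop (𝓝 0) := by
          have := ((tendsto_const_nhds : Tendsto (fun _ : ℕ => l) atTop (𝓝 l)).sub ha).abs
          simpa using this
        have hb := h0'.const_mul (C * ∑ i, |x i|)
        rw [mul_zero] at hb
        refine squeeze_zero (fun n => dist_nonneg) (fun n => ?_) hb
        rw [Real.dist_eq]
        calc |N (l • x) - N (((((⌊l * (n : ℝ)⌋₊ : ℕ) : ℝ)) / n) • x)|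
            ≤ C * ∑ i, |(l • x) i - ((((((⌊l * (n : ℝ)⌋₊ : ℕ) : ℝ)) / n) • x)) i| :=
              hNlip _ _
          _ = C * ∑ i, |x i| * |l - ((⌊l * (n : ℝ)⌋₊ : ℕ) : ℝ) / n| := by
              congr 1
              refine Finset.sum_congr rfl fun i _ => ?_
              simp only [Pi.smul_apply, smul_eq_mul]
              rw [← sub_mul, abs_mul, mul_comm]
          _ = C * ∑ i, |x i| * |l - ((⌊l * (n : ℝ)⌋₊ : ℕ) : ℝ) / n| := rfl
          _ = C * (∑ i, |x i|) * |l - ((⌊l * (n : ℝ)⌋₊ : ℕ) : ℝ) / n| := by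
              rw [← Finset.sum_mul, mul_assoc]
      have h2 : Tendsto (fun n : ℕ => ((⌊l * (n : ℝ)⌋₊ : ℕ) : ℝ) / n * N x) atTop
          (𝓝 (l * N x)) := ha.mul_const _
      refine tendsto_nhds_unique h1 (h2.congr' ?_)
      filter_upwards [eventually_ge_atTop 1] with n hn
      exact (key n hn).symm
    intro l x
    rcases le_or_gt 0 l with hl | hl
    · rw [abs_of_nonneg hl]
      exact hnn l hl x
    · have he : l • x = -((-l) • x) := by
        rw [neg_smul, neg_neg]
      rw [he, hNneg, hnn (-l) (by linarith) x, abs_of_neg hl]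
  have hlimit : ∀ v : Fin m → ℤ,
      Tendsto (fun n : ℕ => d 0 ((n : ℤ) • v) / (n : ℝ)) atTop
        (𝓝 (N (fun i => (v i : ℝ)))) := by
    intro v
    rw [hNint v]
    exact hF v
  refine ⟨N, ⟨⟨hNpos, hNhom, hNadd⟩, hlimit⟩, ?_⟩
  rintro N' ⟨⟨hpos', hhom', hadd'⟩, hlim'⟩
  have hint' : ∀ v : Fin m → ℤ, N' (fun i => (v i : ℝ)) = F v :=
    fun v => tendsto_nhds_unique (hlim' v) (hF v)
  have hC'0 : 0 ≤ ∑ i, N' (Pi.single i 1) := Finset.sum_nonneg fun i _ => hpos' _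
  have hlip' := BBI.rlip N' hpos' hhom' hadd'
  funext x
  refine tendsto_nhds_unique ?_ (hN x)
  have h1 : Tendsto (fun n : ℕ => N' (((n : ℝ))⁻¹ • fun i => ((BBI.flr x n i : ℤ) : ℝ)))
      atTop (𝓝 (N' x)) := by
    refine Filter.Tendsto.congr_dist (f₁ := fun _ => N' x) tendsto_const_nhds ?_
    have hb : Tendsto (fun n : ℕ => (∑ i, N' (Pi.single i 1)) * m / n) atTop (𝓝 0) :=
      tendsto_const_div_atTop_nhds_zero_nat _
    refine squeeze_zero' (.of_forall fun n => dist_nonneg) ?_ hb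
    filter_upwards [eventually_ge_atTop 1] with n hn
    have hn0 : (0 : ℝ) < n := by exact_mod_cast hn
    rw [Real.dist_eq]
    calc |N' x - N' (((n : ℝ))⁻¹ • fun i => ((BBI.flr x n i : ℤ) : ℝ))|
        ≤ (∑ i, N' (Pi.single i 1))
          * ∑ i, |x i - (((n : ℝ))⁻¹ • fun i => ((BBI.flr x n i : ℤ) : ℝ)) i| := hlip' _ _
      _ ≤ (∑ i, N' (Pi.single i 1)) * ∑ _i : Fin m, 1 / (n : ℝ) := by
          refine mul_le_mul_of_nonneg_left (Finset.sum_le_sum fun i _ => ?_) hC'0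
          simp only [Pi.smul_apply, smul_eq_mul]
          have f1 := Int.floor_le ((n : ℝ) * x i)
          have f2 := Int.sub_one_lt_floor ((n : ℝ) * x i)
          have he : x i - (n : ℝ)⁻¹ * ((BBI.flr x n i : ℤ) : ℝ)
              = ((n : ℝ) * x i - ((⌊(n : ℝ) * x i⌋ : ℤ) : ℝ)) / n := by
            simp only [BBI.flr]
            rw [sub_div, mul_div_cancel_left₀ _ hn0.ne', div_eq_inv_mul]
          rw [he, abs_div, abs_of_pos hn0]
          gcongr
          rw [abs_le]
          constructor <;> linarith
      _ = (∑ i, N' (Pi.single i 1)) * m / n := by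
          simp [Finset.sum_const, nsmul_eq_mul]
          ring
  refine h1.congr' ?_
  filter_upwards [eventually_ge_atTop 1] with n hn
  have hn0 : (0 : ℝ) < n := by exact_mod_cast hn
  rw [hhom', hint' (BBI.flr x n), abs_of_pos (inv_pos.mpr hn0), inv_mul_eq_div]
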